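/- Let 3/4 < λ < 1 and 1 < p ≤ 5. Define φ(r) = (1/2)·sec((π/2)√(1−λ))·[−(p+3)cos((π/2 − 2r)√(1−λ)) + 2(p−1)cos(r√(1−λ))]. Then φ(r) < 0 for all r ∈ [π/4, π/2); moreover φ is strictly convex on [π/4, π/2), φ'(π/4) < 0, φ'(π/2) > 0, φ(π/4) ≤ (1/2)sec((π/2)√(1−λ))(p−5) ≤ 0 and φ(π/2) = (p−5)/2 ≤ 0. -/

import Mathlib

open Real

private lemma key16 (p s r : ℝ) (hp1 : 1 < p) (hp5 : p ≤ 5) (hs : 0 < s) (hs2 : s < 1/2)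
    (hr1 : π/4 ≤ r) (hr2 : r < π/2) :
    2*(p-1) * Real.cos (r*s) < (p+3) * Real.cos ((π/2 - 2*r)*s) := by
  have hπ := Real.pi_pos
  have hflip : Real.cos ((π/2 - 2*r)*s) = Real.cos ((2*r - π/2)*s) := by
    rw [← Real.cos_neg]; ring_nf
  rw [hflip]
  have harg1 : 0 ≤ (2*r - π/2)*s := mul_nonneg (by linarith) hs.le
  have harg2 : (2*r - π/2)*s < r*s := by
    apply mul_lt_mul_of_pos_right _ hs; linarith
  have hrpos : 0 < r := by linarith
  have harg3 : r*s < π/2 := by nlinarith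
  have hcos : Real.cos (r*s) < Real.cos ((2*r-π/2)*s) :=
    Real.cos_lt_cos_of_nonneg_of_le_pi harg1 (by linarith) harg2
  have hcospos : 0 < Real.cos (r*s) :=
    Real.cos_pos_of_mem_Ioo ⟨by linarith, harg3⟩
  nlinarith

private lemma hasDerivAt_phi16 (p s C r : ℝ) :
    HasDerivAt (fun r => C * (-(p+3) * Real.cos ((π/2 - 2*r)*s) + 2*(p-1) * Real.cos (r*s)))
      (C * (-(p+3) * (2*s) * Real.sin ((π/2 - 2*r)*s) - 2*(p-1)*s * Real.sin (r*s))) r := by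
  have h1 : HasDerivAt (fun r : ℝ => (π/2 - 2*r)*s) (-2*s) r := by
    have := ((hasDerivAt_const r (π/2)).sub ((hasDerivAt_id r).const_mul 2)).mul_const s
    simpa using this
  have h2 := h1.cos
  have h3 : HasDerivAt (fun r : ℝ => r*s) s r := by
    simpa using (hasDerivAt_id r).mul_const s
  have h4 := h3.cos
  have := ((h2.const_mul (-(p+3))).add (h4.const_mul (2*(p-1)))).const_mul C
  refine this.congr_deriv ?_
  ring

private lemma hasDerivAt_psi16 (p s C r : ℝ) :
    HasDerivAt (fun r => C * (-(p+3) * (2*s) * Real.sin ((π/2 - 2*r)*s) - 2*(p-1)*s * Real.sin (r*s)))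
      (C * s^2 * (4*(p+3) * Real.cos ((π/2 - 2*r)*s) - 2*(p-1) * Real.cos (r*s))) r := by
  have h1 : HasDerivAt (fun r : ℝ => (π/2 - 2*r)*s) (-2*s) r := by
    have := ((hasDerivAt_const r (π/2)).sub ((hasDerivAt_id r).const_mul 2)).mul_const s
    simpa using this
  have h2 := h1.sin
  have h3 : HasDerivAt (fun r : ℝ => r*s) s r := by
    simpa using (hasDerivAt_id r).mul_const s
  have h4 := h3.sin
  have := ((h2.const_mul (-(p+3) * (2*s))).sub (h4.const_mul (2*(p-1)*s))).const_mul C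
  refine this.congr_deriv ?_
  ring

set_option maxHeartbeats 1600000 in
theorem stmt16 (lam p : ℝ) (h1 : 3/4 < lam) (h2 : lam < 1) (hp1 : 1 < p) (hp5 : p ≤ 5)
    (φ : ℝ → ℝ)
    (hφ : φ = fun r => (1/2) * (1 / Real.cos ((π/2) * Real.sqrt (1 - lam)))
      * (-(p+3) * Real.cos ((π/2 - 2*r) * Real.sqrt (1 - lam))
        + 2*(p-1) * Real.cos (r * Real.sqrt (1 - lam)))) :
    (∀ r ∈ Set.Ico (π/4) (π/2), φ r < 0) ∧
    StrictConvexOn ℝ (Set.Ico (π/4) (π/2)) φ ∧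
    deriv φ (π/4) < 0 ∧
    0 < deriv φ (π/2) ∧
    φ (π/4) ≤ (1/2) * (1 / Real.cos ((π/2) * Real.sqrt (1 - lam))) * (p - 5) ∧
    (1/2) * (1 / Real.cos ((π/2) * Real.sqrt (1 - lam))) * (p - 5) ≤ 0 ∧
    φ (π/2) = (p - 5)/2 ∧ (p - 5)/2 ≤ 0 := by
  have hπ := Real.pi_pos
  set s : ℝ := Real.sqrt (1 - lam) with hs_def
  have hs : 0 < s := Real.sqrt_pos.2 (by linarith)
  have hs2 : s < 1/2 := by
    have : s^2 < (1/2)^2 := by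
      rw [hs_def, Real.sq_sqrt (by linarith : (0:ℝ) ≤ 1 - lam)]; norm_num; linarith
    nlinarith
  have hcosX : 0 < Real.cos (π/2 * s) :=
    Real.cos_pos_of_mem_Ioo ⟨by nlinarith, by nlinarith⟩
  set C : ℝ := (1/2) * (1 / Real.cos (π/2 * s)) with hC_def
  have hC : 0 < C := by positivity
  have hφ' : φ = fun r => C * (-(p+3) * Real.cos ((π/2 - 2*r)*s) + 2*(p-1) * Real.cos (r*s)) := by
    rw [hφ]
  subst hφ'
  have hderiv : deriv (fun r => C * (-(p+3) * Real.cos ((π/2 - 2*r)*s) + 2*(p-1) * Real.cos (r*s)))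
      = fun r => C * (-(p+3) * (2*s) * Real.sin ((π/2 - 2*r)*s) - 2*(p-1)*s * Real.sin (r*s)) := by
    funext r; exact (hasDerivAt_phi16 p s C r).deriv
  refine ⟨?_, ?_, ?_, ?_, ?_, ?_, ?_, ?_⟩
  · -- negativity
    rintro r ⟨hr1, hr2⟩
    have := key16 p s r hp1 hp5 hs hs2 hr1 hr2
    nlinarith
  · -- strict convexity
    apply strictConvexOn_of_deriv2_pos (convex_Ico _ _)
    · apply Continuous.continuousOn; fun_prop
    · intro x hx
      rw [interior_Ico] at hx
      obtain ⟨hx1, hx2⟩ := hx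
      have h2d : deriv^[2] (fun r => C * (-(p+3) * Real.cos ((π/2 - 2*r)*s)
          + 2*(p-1) * Real.cos (r*s))) x
          = C * s^2 * (4*(p+3) * Real.cos ((π/2 - 2*x)*s) - 2*(p-1) * Real.cos (x*s)) := by
        show deriv (deriv _) x = _
        rw [hderiv]
        exact (hasDerivAt_psi16 p s C x).deriv
      rw [h2d]
      have hk := key16 p s x hp1 hp5 hs hs2 hx1.le hx2
      have hflip : Real.cos ((π/2 - 2*x)*s) = Real.cos ((2*x - π/2)*s) := by
        rw [← Real.cos_neg]; ring_nf
      have hcpos : 0 < Real.cos ((π/2 - 2*x)*s) := by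
        rw [hflip]
        apply Real.cos_pos_of_mem_Ioo
        constructor
        · nlinarith
        · nlinarith
      have hs2' : 0 < s^2 := by positivity
      have h5 : 0 < 4*(p+3) * Real.cos ((π/2 - 2*x)*s) - 2*(p-1) * Real.cos (x*s) := by
        nlinarith
      exact mul_pos (mul_pos hC hs2') h5
  · -- deriv at π/4
    rw [hderiv]
    have e1 : (π/2 - 2*(π/4))*s = 0 := by ring
    have hsin : 0 < Real.sin (π/4 * s) :=
      Real.sin_pos_of_pos_of_lt_pi (by positivity) (by nlinarith)
    simp only [e1, Real.sin_zero]
    nlinarith [mul_pos (mul_pos hC hs) hsin]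
  · -- deriv at π/2
    rw [hderiv]
    have e1 : (π/2 - 2*(π/2))*s = -(π/2 * s) := by ring
    have hsin : 0 < Real.sin (π/2 * s) :=
      Real.sin_pos_of_pos_of_lt_pi (by positivity) (by nlinarith)
    simp only [e1, Real.sin_neg]
    nlinarith [mul_pos (mul_pos hC hs) hsin]
  · -- φ(π/4) ≤ C(p-5)
    have e1 : (π/2 - 2*(π/4))*s = 0 := by ring
    simp only [e1, Real.cos_zero]
    have hle : Real.cos (π/4 * s) ≤ 1 := Real.cos_le_one _
    nlinarith [mul_nonneg hC.le (mul_nonneg (by linarith : (0:ℝ) ≤ 2*(p-1)) (by linarith : 0 ≤ 1 - Real.cos (π/4 * s)))]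
  · -- C(p-5) ≤ 0
    nlinarith
  · -- φ(π/2) = (p-5)/2
    have e1 : (π/2 - 2*(π/2))*s = -(π/2 * s) := by ring
    show C * (-(p + 3) * Real.cos ((π / 2 - 2 * (π / 2)) * s) + 2 * (p - 1) * Real.cos (π / 2 * s)) = (p - 5) / 2
    rw [e1, Real.cos_neg, hC_def]
    have hc := hcosX.ne'
    have e2 : 1/2 * (1/Real.cos (π/2*s)) * (-(p + 3) * Real.cos (π/2*s)
        + 2 * (p - 1) * Real.cos (π/2*s))
        = (p-5)/2 * (Real.cos (π/2*s) / Real.cos (π/2*s)) := by ring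
    rw [e2, div_self hc, mul_one]
  · linarith
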